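/- Every solution of (*) with initial condition in 𝒟 = ℝ × (0, π/2) × ℝ remains in 𝒟 for all times; that is, if θ(0) ∈ (0, π/2) then θ(t) ∈ (0, π/2) for all t ∈ ℝ. -/

import Mathlib

/-- The constant `m = m₁ + m₂ + 2/g`. -/
noncomputable def mconst (g m₁ m₂ : ℕ) : ℝ := (m₁ : ℝ) + (m₂ : ℝ) + 2 / (g : ℝ)

/-- The angle `θ* = arctan √(m₁/m₂)`. -/
noncomputable def thetaStar (m₁ m₂ : ℕ) : ℝ :=
  Real.arctan (Real.sqrt ((m₁ : ℝ) / (m₂ : ℝ)))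

/-- `l(θ) = m₁ cos² θ - m₂ sin² θ`. -/
noncomputable def lfun (m₁ m₂ : ℕ) (θ : ℝ) : ℝ :=
  (m₁ : ℝ) * Real.cos θ ^ 2 - (m₂ : ℝ) * Real.sin θ ^ 2

/-- `(ξ, θ, α)` is a (globally defined) solution of the ODE system (*):
`ξ' = cos α · sin 2θ`, `θ' = sin α · sin 2θ`,
`α' = sin α · sin 2θ · (exp((4/g)ξ) - m) + 2 cos α · l(θ)`. -/
def IsSolution (g m₁ m₂ : ℕ) (ξ θ α : ℝ → ℝ) : Prop :=
  ∀ t : ℝ,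
    HasDerivAt ξ (Real.cos (α t) * Real.sin (2 * θ t)) t ∧
    HasDerivAt θ (Real.sin (α t) * Real.sin (2 * θ t)) t ∧
    HasDerivAt α
      (Real.sin (α t) * Real.sin (2 * θ t) *
          (Real.exp (4 / (g : ℝ) * ξ t) - mconst g m₁ m₂) +
        2 * Real.cos (α t) * lfun m₁ m₂ (θ t)) t

/-- The scalar RHS `y ↦ sin(α t) · sin(2y)` is Lipschitz with constant 2. -/
lemma lipschitz_rhs (a : ℝ) :
    LipschitzWith 2 (fun y : ℝ => Real.sin a * Real.sin (2 * y)) := by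
  apply LipschitzWith.of_dist_le_mul
  intro x y
  simp only [Real.dist_eq, NNReal.coe_ofNat]
  have ha : |Real.sin a| ≤ 1 := Real.abs_sin_le_one a
  have h2 : |Real.sin (2 * x) - Real.sin (2 * y)| ≤ 2 * |x - y| := by
    rw [Real.sin_sub_sin, abs_mul, abs_mul]
    have h3 : |Real.sin ((2 * x - 2 * y) / 2)| ≤ |x - y| := by
      calc |Real.sin ((2 * x - 2 * y) / 2)| ≤ |(2 * x - 2 * y) / 2| :=
            Real.abs_sin_le_abs
        _ = |x - y| := by rw [show (2 * x - 2 * y) / 2 = x - y by ring]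
    have h4 : |Real.cos ((2 * x + 2 * y) / 2)| ≤ 1 := Real.abs_cos_le_one _
    have h5 : |(2:ℝ)| = 2 := by norm_num
    rw [h5]
    nlinarith [abs_nonneg (Real.sin ((2 * x - 2 * y) / 2)), abs_nonneg (x - y),
      abs_nonneg (Real.cos ((2 * x + 2 * y) / 2))]
  have h6 : |Real.sin a * Real.sin (2 * x) - Real.sin a * Real.sin (2 * y)|
      = |Real.sin a| * |Real.sin (2 * x) - Real.sin (2 * y)| := by
    rw [← abs_mul]; ring_nf
  rw [h6]
  nlinarith [abs_nonneg (Real.sin (2 * x) - Real.sin (2 * y)), abs_nonneg (x - y)]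

/-- If `θ` solves `θ' = sin(α t) · sin(2θ)` and `θ t₁ = c` with `sin(2c) = 0`,
then `θ 0 = c` by uniqueness of solutions. -/
lemma eq_const_of_hit (α θ : ℝ → ℝ)
    (hθ : ∀ t, HasDerivAt θ (Real.sin (α t) * Real.sin (2 * θ t)) t)
    (c : ℝ) (hc : Real.sin (2 * c) = 0) (t₁ : ℝ) (h : θ t₁ = c) : θ 0 = c := by
  set v : ℝ → ℝ → ℝ := fun t y => Real.sin (α t) * Real.sin (2 * y) with hv_def
  have hv : ∀ t, LipschitzOnWith 2 (v t) Set.univ :=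
    fun t => (lipschitz_rhs (α t)).lipschitzOnWith
  set a : ℝ := min t₁ 0 - 1
  set b : ℝ := max t₁ 0 + 1
  have ht₁ : t₁ ∈ Set.Ioo a b :=
    ⟨by simp only [a]; have := min_le_left t₁ 0; linarith,
     by simp only [b]; have := le_max_left t₁ 0; linarith⟩
  have h0 : (0:ℝ) ∈ Set.Icc a b :=
    ⟨by simp only [a]; have := min_le_right t₁ 0; linarith,
     by simp only [b]; have := le_max_right t₁ 0; linarith⟩
  have key : Set.EqOn θ (fun _ => c) (Set.Icc a b) := by
    apply ODE_solution_unique_of_mem_Icc (fun t _ => hv t) ht₁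
    · exact fun t _ => (hθ t).continuousAt.continuousWithinAt
    · exact fun t _ => hθ t
    · exact fun _ _ => Set.mem_univ _
    · exact continuousOn_const
    · intro t _
      have : v t c = 0 := by simp [hv_def, hc]
      simpa [this] using (hasDerivAt_const t c)
    · exact fun _ _ => Set.mem_univ _
    · simpa using h
  exact key h0

/-- Solutions of (*) starting in `𝒟 = ℝ × (0, π/2) × ℝ` remain in `𝒟`
for all times. -/
theorem stmt2 (g m₁ m₂ : ℕ) (hg : g = 1 ∨ g = 2 ∨ g = 3 ∨ g = 4 ∨ g = 6)
    (hm₁ : 0 < m₁) (hm₂ : 0 < m₂)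
    (ξ θ α : ℝ → ℝ) (hsol : IsSolution g m₁ m₂ ξ θ α)
    (h0 : θ 0 ∈ Set.Ioo 0 (Real.pi / 2)) :
    ∀ t : ℝ, θ t ∈ Set.Ioo 0 (Real.pi / 2) := by
  have hθ : ∀ t, HasDerivAt θ (Real.sin (α t) * Real.sin (2 * θ t)) t :=
    fun t => (hsol t).2.1
  have hcont : Continuous θ :=
    continuous_iff_continuousAt.mpr fun t => (hθ t).continuousAt
  -- θ never hits 0
  have hne0 : ∀ t, θ t ≠ 0 := by
    intro t ht
    have := eq_const_of_hit α θ hθ 0 (by simp) t ht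
    exact absurd this (ne_of_gt h0.1)
  -- θ never hits π/2
  have hneh : ∀ t, θ t ≠ Real.pi / 2 := by
    intro t ht
    have := eq_const_of_hit α θ hθ (Real.pi / 2)
      (by rw [show 2 * (Real.pi / 2) = Real.pi by ring, Real.sin_pi]) t ht
    exact absurd this (ne_of_lt h0.2)
  intro t
  constructor
  · by_contra hle
    push_neg at hle
    obtain ⟨s, _, hs⟩ := intermediate_value_uIcc (a := 0) (b := t)
      (hcont.continuousOn) (show (0:ℝ) ∈ Set.uIcc (θ 0) (θ t) from
        Set.mem_uIcc.mpr (Or.inr ⟨hle, le_of_lt h0.1⟩))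
    exact hne0 s hs
  · by_contra hle
    push_neg at hle
    obtain ⟨s, _, hs⟩ := intermediate_value_uIcc (a := 0) (b := t)
      (hcont.continuousOn) (show Real.pi / 2 ∈ Set.uIcc (θ 0) (θ t) from
        Set.mem_uIcc.mpr (Or.inl ⟨le_of_lt h0.2, hle⟩))
    exact hneh s hs
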